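/- Let X be a real normed space, S ⊆ X a nonempty convex set, and b : X → ℝ convex on S. Define the modulus of uniform convexity ψ : [0,∞) → [0,∞] of b on S by ψ(t) := inf{ (λ b(x) + (1−λ) b(y) − b(λx + (1−λ)y)) / (λ(1−λ)) : x, y ∈ S, ‖x − y‖ = t, λ ∈ (0,1) }, with inf ∅ := ∞ (by convexity the infimand is nonnegative, so ψ takes values in [0,∞]). Then: (a) ψ(ct) ≥ c² ψ(t) for all c ≥ 1 and t ≥ 0; (b) ψ(ct) ≤ c² ψ(t) for all c ∈ (0,1) and t ≥ 0; (c) the function t ↦ ψ(t)/t² is nondecreasing on (0,∞); (d) ψ is nondecreasing on [0,∞). -/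

import Mathlib

set_option maxHeartbeats 1000000

open scoped ENNReal

noncomputable def auxQ {X : Type*} [NormedAddCommGroup X] [NormedSpace ℝ X]
    (b : X → ℝ) (u v : X) (m : ℝ) : ℝ :=
  (m * b u + (1 - m) * b v - b (m • u + (1 - m) • v)) / (m * (1 - m))

section Aux
variable {X : Type*} [NormedAddCommGroup X] [NormedSpace ℝ X]
variable {S : Set X} {b : X → ℝ}

lemma auxQ_comm (u v : X) (m : ℝ) : auxQ b u v m = auxQ b v u (1 - m) := by
  have h : (1 - m) • v + (1 - (1 - m)) • u = m • u + (1 - m) • v := by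
    rw [sub_sub_cancel]; exact add_comm _ _
  simp only [auxQ, h]
  rw [sub_sub_cancel]
  ring

/-- Core one-step lemma, assuming `l ≤ 1/2`. -/
lemma auxCore (hSconv : Convex ℝ S) {d : ℝ} (hd1 : 1/2 < d) (hd2 : d < 1)
    {x : X} (hx : x ∈ S) {y : X} (hy : y ∈ S) {l : ℝ} (hl0 : 0 < l) (hl2 : l ≤ 1/2) :
    ∃ u ∈ S, ∃ v ∈ S, ∃ m ∈ Set.Ioo (0:ℝ) 1,
      ‖u - v‖ = d * ‖x - y‖ ∧ auxQ b u v m ≤ d^2 * auxQ b x y l := by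
  have hd0 : (0:ℝ) < d := by linarith
  have hd0' : d ≠ 0 := ne_of_gt hd0
  have hdl : l < d := by linarith
  have h1d : (0:ℝ) < 1 - d := by linarith
  have h2d : (0:ℝ) < 2*d - 1 := by linarith
  have h1l : (0:ℝ) < 1 - l := by linarith
  have hdl' : d - l ≠ 0 := sub_ne_zero.2 (ne_of_gt hdl)
  have h1d' : (1:ℝ) - d ≠ 0 := ne_of_gt h1d
  have h2d' : 2*d - 1 ≠ 0 := ne_of_gt h2d
  have h1l' : (1:ℝ) - l ≠ 0 := ne_of_gt h1l
  have hl0' : l ≠ 0 := ne_of_gt hl0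
  set Pd : X := d • x + (1 - d) • y with hPd
  set Pm : X := (1-d) • x + d • y with hPm
  set Pl : X := l • x + (1-l) • y with hPl
  have hPdS : Pd ∈ S := hSconv hx hy (by linarith) (by linarith) (by ring)
  have hPmS : Pm ∈ S := hSconv hx hy (by linarith) (by linarith) (by ring)
  -- combined point identities
  have hA : (l/d) • Pd + (1 - l/d) • y = Pl := by
    rw [hPd, hPl]; match_scalars <;> field_simp [hd0'] <;> ring
  have hB : ((1-d)/d) • Pd + (1 - (1-d)/d) • y = Pm := by
    rw [hPd, hPm]; match_scalars <;> field_simp [hd0'] <;> ring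
  have hC : ((2*d-1)/d) • x + (1 - (2*d-1)/d) • Pm = Pd := by
    rw [hPd, hPm]; match_scalars <;> field_simp [hd0'] <;> ring
  -- norms
  have hnPd : ‖Pd - y‖ = d * ‖x - y‖ := by
    have : Pd - y = d • (x - y) := by rw [hPd]; match_scalars <;> ring
    rw [this, norm_smul, Real.norm_eq_abs, abs_of_pos hd0]
  have hnPm : ‖x - Pm‖ = d * ‖x - y‖ := by
    have : x - Pm = d • (x - y) := by rw [hPm]; match_scalars <;> ring
    rw [this, norm_smul, Real.norm_eq_abs, abs_of_pos hd0]
  -- the key algebraic identity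
  have hxyl : l • x + (1 - l) • y = Pl := by rw [hPl]
  have key : (d - l)/(1 - l) * auxQ b Pd y (l/d)
      + (1 - d)^2/(1 - l) * auxQ b Pd y ((1-d)/d)
      + (d*(1 - d))/(1 - l) * auxQ b x Pm ((2*d-1)/d)
      = d^2 * auxQ b x y l := by
    simp only [auxQ, hA, hB, hC, hxyl]
    have e1 : 1 - l/d = (d - l)/d := by field_simp
    have e2 : 1 - (1-d)/d = (2*d-1)/d := by field_simp; ring
    have e3 : 1 - (2*d-1)/d = (1-d)/d := by field_simp; ring
    rw [e1, e2, e3]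
    rw [div_mul_div_comm, div_mul_div_comm, div_mul_div_comm, div_mul_div_comm]
    field_simp
    have h2d'' : d*2-1 ≠ 0 := by linarith
    field_simp
    ring
  set T := d^2 * auxQ b x y l with hT
  rcases le_or_gt (auxQ b Pd y (l/d)) T with h | hA'
  · exact ⟨Pd, hPdS, y, hy, l/d, ⟨by positivity, by rw [div_lt_one hd0]; exact hdl⟩, hnPd, h⟩
  rcases le_or_gt (auxQ b Pd y ((1-d)/d)) T with h | hB'
  · exact ⟨Pd, hPdS, y, hy, (1-d)/d, ⟨by positivity, by rw [div_lt_one hd0]; linarith⟩, hnPd, h⟩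
  rcases le_or_gt (auxQ b x Pm ((2*d-1)/d)) T with h | hC'
  · exact ⟨x, hx, Pm, hPmS, (2*d-1)/d, ⟨by positivity, by rw [div_lt_one hd0]; linarith⟩, hnPm, h⟩
  exfalso
  have hdl0 : (0:ℝ) < d - l := by linarith
  have hw1 : 0 < (d - l)/(1 - l) := div_pos hdl0 h1l
  have hw2 : 0 < (1 - d)^2/(1 - l) := div_pos (by positivity) h1l
  have hw3 : 0 < (d*(1 - d))/(1 - l) := div_pos (by positivity) h1l
  have hsumT : (d - l)/(1 - l) * T + (1 - d)^2/(1 - l) * T + (d*(1 - d))/(1 - l) * T = T := by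
    rw [div_mul_eq_mul_div, div_mul_eq_mul_div, div_mul_eq_mul_div, ← add_div,
      ← add_div, div_eq_iff h1l']
    ring
  linarith [mul_lt_mul_of_pos_left hA' hw1, mul_lt_mul_of_pos_left hB' hw2,
    mul_lt_mul_of_pos_left hC' hw3, key, hsumT]

lemma auxOneStep (hSconv : Convex ℝ S) {d : ℝ} (hd1 : 1/2 < d) (hd2 : d < 1)
    {x : X} (hx : x ∈ S) {y : X} (hy : y ∈ S) {l : ℝ} (hl : l ∈ Set.Ioo (0:ℝ) 1) :
    ∃ u ∈ S, ∃ v ∈ S, ∃ m ∈ Set.Ioo (0:ℝ) 1,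
      ‖u - v‖ = d * ‖x - y‖ ∧ auxQ b u v m ≤ d^2 * auxQ b x y l := by
  obtain ⟨hla, hlb⟩ := hl
  rcases le_or_gt l (1/2) with h | h
  · exact auxCore hSconv hd1 hd2 hx hy hla h
  · obtain ⟨u, hu, v, hv, m, hm, hn, hq⟩ :=
      auxCore (b := b) hSconv hd1 hd2 hy hx (l := 1 - l) (by linarith) (by linarith)
    refine ⟨u, hu, v, hv, m, hm, ?_, ?_⟩
    · rw [hn, norm_sub_rev]
    · rw [auxQ_comm (b := b) x y l]
      exact hq

lemma auxK (hSconv : Convex ℝ S) : ∀ n : ℕ, ∀ c : ℝ, 0 < c → c < 1 → (3/4)^n * (1/2) < c →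
    ∀ x ∈ S, ∀ y ∈ S, ∀ l ∈ Set.Ioo (0:ℝ) 1,
    ∃ u ∈ S, ∃ v ∈ S, ∃ m ∈ Set.Ioo (0:ℝ) 1,
      ‖u - v‖ = c * ‖x - y‖ ∧ auxQ b u v m ≤ c^2 * auxQ b x y l := by
  intro n
  induction n with
  | zero =>
    intro c hc0 hc1 hcl x hx y hy l hl
    simp only [pow_zero, one_mul] at hcl
    exact auxOneStep hSconv hcl hc1 hx hy hl
  | succ n ih =>
    intro c hc0 hc1 hcl x hx y hy l hl
    rcases lt_or_ge (1/2 : ℝ) c with h | h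
    · exact auxOneStep hSconv h hc1 hx hy hl
    · have hc0' : 0 < 4*c/3 := by linarith
      have hc1' : 4*c/3 < 1 := by linarith
      have hcl' : (3/4)^n * (1/2) < 4*c/3 := by
        have : (3/4:ℝ)^(n+1) * (1/2) < c := hcl
        rw [pow_succ] at this
        linarith
      obtain ⟨u, hu, v, hv, m, hm, hn1, hq1⟩ := ih (4*c/3) hc0' hc1' hcl' x hx y hy l hl
      obtain ⟨u', hu', v', hv', m', hm', hn2, hq2⟩ :=
        auxOneStep (b := b) hSconv (d := 3/4) (by norm_num) (by norm_num) hu hv hm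
      refine ⟨u', hu', v', hv', m', hm', ?_, ?_⟩
      · rw [hn2, hn1]; ring
      · calc auxQ b u' v' m' ≤ (3/4)^2 * auxQ b u v m := hq2
          _ ≤ (3/4)^2 * ((4*c/3)^2 * auxQ b x y l) := by
              apply mul_le_mul_of_nonneg_left hq1 (by norm_num)
          _ = c^2 * auxQ b x y l := by ring

lemma auxScale (hSconv : Convex ℝ S) {c : ℝ} (hc0 : 0 < c) (hc1 : c < 1)
    {x : X} (hx : x ∈ S) {y : X} (hy : y ∈ S) {l : ℝ} (hl : l ∈ Set.Ioo (0:ℝ) 1) :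
    ∃ u ∈ S, ∃ v ∈ S, ∃ m ∈ Set.Ioo (0:ℝ) 1,
      ‖u - v‖ = c * ‖x - y‖ ∧ auxQ b u v m ≤ c^2 * auxQ b x y l := by
  obtain ⟨n, hn⟩ := exists_pow_lt_of_lt_one (by linarith : (0:ℝ) < 2*c) (by norm_num : (3/4:ℝ) < 1)
  have : (3/4:ℝ)^n * (1/2) < c := by linarith
  exact auxK hSconv n c hc0 hc1 this x hx y hy l hl

end Aux

/-- Properties of the modulus of uniform convexity `ψ` of a convex
function `b` on a nonempty convex set `S`:
(a) `ψ(ct) ≥ c² ψ(t)` for `c ≥ 1`, `t ≥ 0`;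
(b) `ψ(ct) ≤ c² ψ(t)` for `c ∈ (0,1)`, `t ≥ 0`;
(c) `t ↦ ψ(t)/t²` is nondecreasing on `(0,∞)`;
(d) `ψ` is nondecreasing on `[0,∞)`. -/
theorem modulus_of_uniform_convexity_properties
    {X : Type*} [NormedAddCommGroup X] [NormedSpace ℝ X]
    (S : Set X) (hS : S.Nonempty) (hSconv : Convex ℝ S)
    (b : X → ℝ) (hb : ConvexOn ℝ S b)
    (ψ : ℝ → ℝ≥0∞)
    (hψ : ∀ t : ℝ, ψ t =
      sInf { r : ℝ≥0∞ | ∃ x ∈ S, ∃ y ∈ S, ∃ l ∈ Set.Ioo (0:ℝ) 1, ‖x - y‖ = t ∧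
        r = ENNReal.ofReal
          ((l * b x + (1 - l) * b y - b (l • x + (1 - l) • y)) / (l * (1 - l))) }) :
    (∀ c : ℝ, 1 ≤ c → ∀ t : ℝ, 0 ≤ t → ENNReal.ofReal (c ^ 2) * ψ t ≤ ψ (c * t)) ∧
    (∀ c : ℝ, c ∈ Set.Ioo (0:ℝ) 1 → ∀ t : ℝ, 0 ≤ t →
      ψ (c * t) ≤ ENNReal.ofReal (c ^ 2) * ψ t) ∧
    (∀ s t : ℝ, 0 < s → s ≤ t →
      ψ s / ENNReal.ofReal (s ^ 2) ≤ ψ t / ENNReal.ofReal (t ^ 2)) ∧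
    (∀ s t : ℝ, 0 ≤ s → s ≤ t → ψ s ≤ ψ t) := by
  have partb : ∀ c : ℝ, c ∈ Set.Ioo (0:ℝ) 1 → ∀ t : ℝ,
      ψ (c * t) ≤ ENNReal.ofReal (c ^ 2) * ψ t := by
    intro c hc t
    have hk0 : ENNReal.ofReal (c^2) ≠ 0 := (ENNReal.ofReal_pos.2 (pow_pos hc.1 2)).ne'
    have hkT : ENNReal.ofReal (c^2) ≠ ⊤ := ENNReal.ofReal_ne_top
    rw [mul_comm (ENNReal.ofReal (c^2)) (ψ t), ← ENNReal.div_le_iff hk0 hkT, hψ t]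
    refine le_sInf ?_
    rintro r ⟨x, hx, y, hy, l, hl, hnorm, rfl⟩
    obtain ⟨u, hu, v, hv, m, hm, hn, hq⟩ := auxScale (b := b) hSconv hc.1 hc.2 hx hy hl
    rw [ENNReal.div_le_iff hk0 hkT]
    have h1 : ψ (c * t) ≤ ENNReal.ofReal (auxQ b u v m) := by
      rw [hψ (c*t)]
      exact sInf_le ⟨u, hu, v, hv, m, hm, by rw [hn, hnorm], rfl⟩
    refine h1.trans ?_
    calc ENNReal.ofReal (auxQ b u v m)
        ≤ ENNReal.ofReal (c^2 * auxQ b x y l) := ENNReal.ofReal_le_ofReal hq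
      _ = ENNReal.ofReal (auxQ b x y l) * ENNReal.ofReal (c^2) := by
          rw [ENNReal.ofReal_mul (by positivity)]; exact mul_comm _ _
  refine ⟨?_, fun c hc t _ => partb c hc t, ?_, ?_⟩
  · -- part (a)
    intro c hc t ht
    rcases eq_or_lt_of_le hc with rfl | h1c
    · simp
    · have hcpos : (0:ℝ) < c := by linarith
      have hinv : (1/c : ℝ) ∈ Set.Ioo (0:ℝ) 1 := by
        constructor
        · positivity
        · rw [div_lt_one hcpos]; linarith
      have h := partb (1/c) hinv (c * t)
      have heq : (1/c) * (c * t) = t := by field_simp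
      rw [heq] at h
      have h2 := mul_le_mul_right h (ENNReal.ofReal (c^2))
      refine h2.trans ?_
      rw [← mul_assoc, ← ENNReal.ofReal_mul (by positivity)]
      have : c^2 * (1/c)^2 = 1 := by field_simp
      rw [this, ENNReal.ofReal_one, one_mul]
  · -- part (c)
    intro s t hs hst
    rcases eq_or_lt_of_le hst with rfl | hlt
    · exact le_rfl
    · have ht0 : (0:ℝ) < t := by linarith
      have hc : (s/t : ℝ) ∈ Set.Ioo (0:ℝ) 1 := ⟨div_pos hs ht0, (div_lt_one ht0).2 hlt⟩
      have h := partb (s/t) hc t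
      rw [div_mul_cancel₀ _ ht0.ne'] at h
      have hof : ENNReal.ofReal ((s/t)^2)
          = ENNReal.ofReal (s^2) / ENNReal.ofReal (t^2) := by
        rw [div_pow, ENNReal.ofReal_div_of_pos (by positivity)]
      rw [hof] at h
      have hs0 : ENNReal.ofReal (s^2) ≠ 0 := (ENNReal.ofReal_pos.2 (by positivity)).ne'
      have hsT : ENNReal.ofReal (s^2) ≠ ⊤ := ENNReal.ofReal_ne_top
      rw [ENNReal.div_le_iff hs0 hsT]
      refine h.trans ?_
      exact le_of_eq (by rw [div_eq_mul_inv, div_eq_mul_inv]; ring)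
  · -- part (d)
    intro s t hs hst
    rcases eq_or_lt_of_le hst with rfl | hlt
    · exact le_rfl
    rcases eq_or_lt_of_le hs with rfl | hs0
    · -- s = 0 : ψ 0 = 0
      obtain ⟨x0, hx0⟩ := hS
      have hpt : ((1:ℝ)/2) • x0 + (1 - (1:ℝ)/2) • x0 = x0 := by
        match_scalars; norm_num
      have h0 : ψ 0 ≤ 0 := by
        rw [hψ 0]
        refine sInf_le ⟨x0, hx0, x0, hx0, 1/2, by norm_num, by simp, ?_⟩
        rw [hpt]
        have he : (1/2 * b x0 + (1 - 1/2) * b x0 - b x0) / (1/2 * (1 - 1/2)) = 0 := by ring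
        rw [he, ENNReal.ofReal_zero]
      exact le_trans (le_trans h0 zero_le) le_rfl
    · have hc : (s/t : ℝ) ∈ Set.Ioo (0:ℝ) 1 :=
        ⟨div_pos hs0 (by linarith), (div_lt_one (by linarith)).2 hlt⟩
      have h := partb (s/t) hc t
      rw [div_mul_cancel₀ _ (by linarith : t ≠ 0)] at h
      refine h.trans ?_
      have : ENNReal.ofReal ((s/t)^2) ≤ 1 := by
        rw [ENNReal.ofReal_le_one]
        have h1 : s/t ≤ 1 := by
          rw [div_le_one (by linarith)]; linarith
        exact pow_le_one₀ (div_nonneg hs (by linarith)) h1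
      calc ENNReal.ofReal ((s/t)^2) * ψ t ≤ 1 * ψ t := mul_le_mul_left this _
        _ = ψ t := one_mul _
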